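/- Let T be a commutative ring, let R be a strongly indecomposable T-algebra, let n ≥ 1, and let K = T(n,R) be the algebra of upper triangular n×n matrices over R. Then every T-algebra automorphism φ of K is a product of an inner automorphism and a ring automorphism: there exist an invertible element u of K and a T-algebra automorphism α of R such that φ(A) = u · ᾱ(A) · u⁻¹ for all A ∈ K, where ᾱ applies α entrywise. -/

import Mathlib

/-- The `T`-subalgebra of upper triangular `n × n` matrices over `R`. -/
def triangularSubalgebra (T R : Type*) [CommRing T] [Ring R] [Algebra T R] (n : ℕ) :
    Subalgebra T (Matrix (Fin n) (Fin n) R) where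
  carrier := {A | ∀ ⦃i j : Fin n⦄, j < i → A i j = 0}
  add_mem' := fun {A B} hA hB i j hij => by
    simp [Matrix.add_apply, hA hij, hB hij]
  mul_mem' := fun {A B} hA hB i j hij => by
    simp only [Matrix.mul_apply]
    refine Finset.sum_eq_zero fun k _ => ?_
    rcases lt_or_ge k i with h | h
    · rw [hA h, zero_mul]
    · rw [hB (lt_of_lt_of_le hij h), mul_zero]
  algebraMap_mem' := fun t i j hij => by
    simp [Matrix.algebraMap_matrix_apply, (ne_of_lt hij).symm]

/-- The set of strictly upper triangular matrices inside the triangular matrix algebra. -/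
def strictlyUpper (T R : Type*) [CommRing T] [Ring R] [Algebra T R] (n : ℕ) :
    Set (triangularSubalgebra T R n) :=
  {A | ∀ i j : Fin n, j ≤ i → (A : Matrix (Fin n) (Fin n) R) i j = 0}

/-- The entrywise action of an automorphism `α` of `R` on the triangular matrix algebra. -/
def entrywiseMap (T R : Type*) [CommRing T] [Ring R] [Algebra T R] (n : ℕ)
    (α : R ≃ₐ[T] R) (A : triangularSubalgebra T R n) : triangularSubalgebra T R n :=
  ⟨Matrix.of fun i j => α ((A : Matrix (Fin n) (Fin n) R) i j),
    fun i j hij => by simp [Matrix.of_apply, A.2 hij]⟩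


namespace Stmt10Aux

variable {T R : Type*} [CommRing T] [Ring R] [Algebra T R] {n : ℕ}

/-- diagonal entry of a product of upper triangular matrices -/
lemma diag_mul {A B : Matrix (Fin n) (Fin n) R}
    (hA : ∀ ⦃i j : Fin n⦄, j < i → A i j = 0) (hB : ∀ ⦃i j : Fin n⦄, j < i → B i j = 0)
    (i : Fin n) : (A * B) i i = A i i * B i i := by
  rw [Matrix.mul_apply]
  rw [Finset.sum_eq_single i]
  · intro k _ hk
    rcases lt_or_gt_of_ne hk with h | h
    · rw [hA h, zero_mul]
    · rw [hB h, mul_zero]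
  · intro h; exact absurd (Finset.mem_univ i) h

/-- powers of strictly upper triangular matrices vanish progressively -/
lemma strict_pow {N : Matrix (Fin n) (Fin n) R}
    (hN : ∀ i j : Fin n, (j : ℕ) ≤ (i : ℕ) → N i j = 0) (k : ℕ) :
    ∀ i j : Fin n, (j : ℕ) < (i : ℕ) + k → (N ^ k) i j = 0 := by
  induction k with
  | zero =>
    intro i j hij
    rw [pow_zero]
    exact Matrix.one_apply_ne' (fun h => by subst h; omega)
  | succ k ih =>
    intro i j hij
    rw [pow_succ, Matrix.mul_apply]
    refine Finset.sum_eq_zero fun l _ => ?_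
    rcases lt_or_ge (l : ℕ) ((i : ℕ) + k) with h | h
    · rw [ih i l h, zero_mul]
    · rw [hN l j (by omega), mul_zero]

lemma strict_nilpotent {N : Matrix (Fin n) (Fin n) R}
    (hN : ∀ i j : Fin n, (j : ℕ) ≤ (i : ℕ) → N i j = 0) : N ^ n = 0 := by
  ext i j
  rw [strict_pow hN n i j (by omega)]
  rfl

/-- a single-entry upper triangular matrix, as an element of the triangular subalgebra;
junk value `0` if the position is below the diagonal -/
def sing (i j : Fin n) (r : R) : triangularSubalgebra T R n :=
  ⟨if i ≤ j then Matrix.single i j r else 0, by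
    intro p q hpq
    split
    · next h =>
      apply Matrix.single_apply_of_ne
      rintro ⟨rfl, rfl⟩
      exact absurd h (not_le.mpr hpq)
    · simp⟩

lemma sing_coe {i j : Fin n} (h : i ≤ j) (r : R) :
    ((sing i j r : triangularSubalgebra T R n) : Matrix (Fin n) (Fin n) R)
      = Matrix.single i j r := if_pos h

lemma sing_inj {i j : Fin n} (h : i ≤ j) {r s : R}
    (hrs : (sing i j r : triangularSubalgebra T R n) = sing i j s) : r = s := by
  have := congrArg (fun A : triangularSubalgebra T R n =>
    (A : Matrix (Fin n) (Fin n) R) i j) hrs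
  simpa [sing_coe h] using this

lemma sing_mul {i j k : Fin n} (hij : i ≤ j) (hjk : j ≤ k) (r s : R) :
    (sing i j r : triangularSubalgebra T R n) * sing j k s = sing i k (r * s) := by
  apply Subtype.ext
  push_cast [sing_coe hij, sing_coe hjk, sing_coe (le_trans hij hjk)]
  exact Matrix.single_mul_single_same _ _ _ _ _

lemma sing_mul_ne {i j k l : Fin n} (hij : i ≤ j) (hkl : k ≤ l) (hjk : j ≠ k) (r s : R) :
    (sing i j r : triangularSubalgebra T R n) * sing k l s = 0 := by
  apply Subtype.ext
  push_cast [sing_coe hij, sing_coe hkl]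
  exact Matrix.single_mul_single_of_ne _ _ _ _ hjk _

lemma sing_add {i j : Fin n} (h : i ≤ j) (r s : R) :
    (sing i j r : triangularSubalgebra T R n) + sing i j s = sing i j (r + s) := by
  apply Subtype.ext
  push_cast [sing_coe h]
  rw [Matrix.single_add]

lemma sing_smul {i j : Fin n} (h : i ≤ j) (t : T) (r : R) :
    t • (sing i j r : triangularSubalgebra T R n) = sing i j (t • r) := by
  apply Subtype.ext
  push_cast [sing_coe h]
  rw [Matrix.smul_single]

/-- the diagonal matrix units -/
def eK (i : Fin n) : triangularSubalgebra T R n := sing i i 1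

lemma corner (i j : Fin n) (h : i ≤ j) (A : triangularSubalgebra T R n) :
    eK i * A * eK j = sing i j ((A : Matrix (Fin n) (Fin n) R) i j) := by
  apply Subtype.ext
  push_cast [eK, sing_coe (le_refl i), sing_coe (le_refl j), sing_coe h]
  ext a b
  by_cases hb : b = j
  · subst hb
    rw [Matrix.mul_single_apply_same]
    by_cases ha : a = i
    · subst ha; simp
    · rw [Matrix.single_mul_apply_of_ne _ _ _ _ _ ha, zero_mul]
      exact (Matrix.single_apply_of_row_ne (fun hh => ha hh.symm) _ _ _).symm
  · rw [Matrix.mul_single_apply_of_ne _ _ _ _ _ hb]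
    exact (Matrix.single_apply_of_col_ne _ _ (fun hh => hb hh.symm) _).symm

lemma sum_eK : (∑ i : Fin n, eK i : triangularSubalgebra T R n) = 1 := by
  apply Subtype.ext
  push_cast [eK, sing_coe (le_refl _)]
  ext a b
  rw [Matrix.sum_apply]
  by_cases hab : a = b
  · subst hab
    rw [Finset.sum_eq_single a, Matrix.single_apply_same, Matrix.one_apply_eq]
    · intro k _ hk
      exact Matrix.single_apply_of_row_ne hk _ _ _
    · intro h; exact absurd (Finset.mem_univ a) h
  · rw [Matrix.one_apply_ne hab]
    refine Finset.sum_eq_zero fun k _ => ?_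
    by_cases hk : k = a
    · subst hk
      exact Matrix.single_apply_of_col_ne _ _ hab _
    · exact Matrix.single_apply_of_row_ne hk _ _ _

/-- the matrix-level middle-entry computation for semicentrality -/
lemma mid_entry (M F : Matrix (Fin n) (Fin n) R) (i j : Fin n) :
    (M * Matrix.single i j (1 : R) * F) i j = M i i * F j j := by
  rw [Matrix.mul_apply]
  rw [Finset.sum_eq_single j]
  · rw [Matrix.mul_single_apply_same, mul_one]
  · intro l _ hl
    rw [Matrix.mul_single_apply_of_ne _ _ _ _ _ hl, zero_mul]
  · intro h; exact absurd (Finset.mem_univ j) h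

/-- leading diagonal idempotents -/
def gK (k : ℕ) : triangularSubalgebra T R n :=
  ⟨Matrix.diagonal (fun i : Fin n => if (i : ℕ) < k then (1 : R) else 0), by
    intro p q hpq
    exact Matrix.diagonal_apply_ne _ (ne_of_lt hpq).symm⟩

lemma gK_coe (k : ℕ) : ((gK k : triangularSubalgebra T R n) : Matrix (Fin n) (Fin n) R)
    = Matrix.diagonal (fun i : Fin n => if (i : ℕ) < k then (1 : R) else 0) := rfl

lemma gK_mul {k l : ℕ} (hkl : k ≤ l) :
    (gK k : triangularSubalgebra T R n) * gK l = gK k := by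
  apply Subtype.ext
  push_cast [gK_coe]
  rw [Matrix.diagonal_mul_diagonal]
  refine congrArg Matrix.diagonal (funext fun i => ?_)
  by_cases h : (i : ℕ) < k
  · simp [h, lt_of_lt_of_le h hkl]
  · simp [h]

lemma gK_mul' {k l : ℕ} (hkl : k ≤ l) :
    (gK l : triangularSubalgebra T R n) * gK k = gK k := by
  apply Subtype.ext
  push_cast [gK_coe]
  rw [Matrix.diagonal_mul_diagonal]
  refine congrArg Matrix.diagonal (funext fun i => ?_)
  by_cases h : (i : ℕ) < k
  · simp [h, lt_of_lt_of_le h hkl]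
  · simp [h]

lemma gK_zero : (gK 0 : triangularSubalgebra T R n) = 0 := by
  apply Subtype.ext
  push_cast [gK_coe]
  rw [show (fun i : Fin n => if (i : ℕ) < 0 then (1 : R) else 0) = fun _ => (0 : R) from
    funext fun i => by simp]
  exact Matrix.diagonal_zero

lemma gK_top : (gK n : triangularSubalgebra T R n) = 1 := by
  apply Subtype.ext
  push_cast [gK_coe]
  rw [show (fun i : Fin n => if (i : ℕ) < n then (1 : R) else 0) = fun _ => (1 : R) from
    funext fun i => by simp [i.isLt]]
  exact Matrix.diagonal_one

lemma gK_succ_sub (k : ℕ) (hk : k < n) :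
    (gK (k + 1) : triangularSubalgebra T R n) - gK k = eK ⟨k, hk⟩ := by
  apply Subtype.ext
  push_cast [gK_coe, eK, sing_coe (le_refl _)]
  rw [Matrix.diagonal_sub]
  ext a b
  by_cases hab : a = b
  · subst hab
    rw [Matrix.diagonal_apply_eq]
    by_cases h : a = (⟨k, hk⟩ : Fin n)
    · subst h; simp
    · have hne : (a : ℕ) ≠ k := fun hh => h (Fin.ext hh)
      rw [Matrix.single_apply_of_row_ne (fun hh => h hh.symm)]
      rcases lt_or_ge (a : ℕ) k with h' | h'
      · rw [if_pos (show (a : ℕ) < k + 1 by omega), if_pos h', sub_self]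
      · rw [if_neg (show ¬(a : ℕ) < k + 1 by omega), if_neg (show ¬(a : ℕ) < k by omega),
          sub_self]
  · rw [Matrix.diagonal_apply_ne _ hab]
    symm
    apply Matrix.single_apply_of_ne
    rintro ⟨rfl, rfl⟩
    exact hab rfl

lemma gK_semicentral (k : ℕ) (B : triangularSubalgebra T R n) :
    (1 - gK k) * B * gK k = 0 := by
  apply Subtype.ext
  have hco : ((1 - gK k : triangularSubalgebra T R n) : Matrix (Fin n) (Fin n) R)
      = Matrix.diagonal (fun i : Fin n => if (i : ℕ) < k then (0 : R) else 1) := by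
    push_cast [gK_coe]
    rw [← Matrix.diagonal_one, Matrix.diagonal_sub]
    refine congrArg Matrix.diagonal (funext fun i => ?_)
    by_cases h : (i : ℕ) < k <;> simp [h]
  push_cast [gK_coe, hco]
  ext p q
  rw [Matrix.mul_diagonal, Matrix.diagonal_mul, Matrix.zero_apply]
  by_cases hq : (q : ℕ) < k
  · by_cases hp : (p : ℕ) < k
    · simp [hp]
    · rw [B.2 (show q < p from Fin.lt_def.mpr (by omega))]
      simp
  · simp [hq]

/-- diagonal entries of a semicentral idempotent in the triangular algebra are
semicentral idempotents of `R` -/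
lemma sc_diag (hstrong : ∀ e : R, e * e = e → (∀ r : R, (1 - e) * r * e = 0) → e = 0 ∨ e = 1)
    (f : triangularSubalgebra T R n) (hidem : f * f = f)
    (hsc : ∀ B : triangularSubalgebra T R n, (1 - f) * B * f = 0) (i : Fin n) :
    (f : Matrix (Fin n) (Fin n) R) i i = 0 ∨ (f : Matrix (Fin n) (Fin n) R) i i = 1 := by
  apply hstrong
  · have := congrArg (fun A : triangularSubalgebra T R n =>
      (A : Matrix (Fin n) (Fin n) R) i i) hidem
    simpa [diag_mul f.2 f.2 i] using this
  · intro r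
    have h0 := congrArg (fun A : triangularSubalgebra T R n =>
      (A : Matrix (Fin n) (Fin n) R) i i) (hsc (sing i i r))
    simp only [Subalgebra.coe_mul, ZeroMemClass.coe_zero, Matrix.zero_apply] at h0
    rw [diag_mul (((1 : triangularSubalgebra T R n) - f) * sing i i r).2 f.2 i,
      diag_mul ((1 : triangularSubalgebra T R n) - f).2 (sing i i r).2 i] at h0
    rw [AddSubgroupClass.coe_sub, OneMemClass.coe_one, Matrix.sub_apply, Matrix.one_apply_eq,
      sing_coe (le_refl i), Matrix.single_apply_same] at h0
    exact h0

lemma sc_prefix (f : triangularSubalgebra T R n)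
    (hsc : ∀ B : triangularSubalgebra T R n, (1 - f) * B * f = 0) {i j : Fin n} (hij : i ≤ j)
    (hj : (f : Matrix (Fin n) (Fin n) R) j j = 1) :
    (f : Matrix (Fin n) (Fin n) R) i i = 1 := by
  have h0 := congrArg (fun A : triangularSubalgebra T R n =>
    (A : Matrix (Fin n) (Fin n) R) i j) (hsc (sing i j 1))
  simp only [Subalgebra.coe_mul, ZeroMemClass.coe_zero, Matrix.zero_apply,
    sing_coe hij] at h0
  rw [mid_entry, hj, mul_one, AddSubgroupClass.coe_sub, OneMemClass.coe_one,
    Matrix.sub_apply, Matrix.one_apply_eq, sub_eq_zero] at h0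
  exact h0.symm

/-- conjugation by a unit as an algebra automorphism -/
def innerAut {S A : Type*} [CommRing S] [Ring A] [Algebra S A] (u : Aˣ) : A ≃ₐ[S] A where
  toFun x := ↑u * x * ↑u⁻¹
  invFun x := ↑u⁻¹ * x * ↑u
  left_inv x := by simp [mul_assoc]
  right_inv x := by simp [mul_assoc]
  map_mul' x y := by simp [mul_assoc]
  map_add' x y := by simp [mul_add, add_mul]
  commutes' t := by
    show (u : A) * algebraMap S A t * ↑u⁻¹ = algebraMap S A t
    rw [← Algebra.commutes t (u : A), mul_assoc, Units.mul_inv, mul_one]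

lemma innerAut_apply {S A : Type*} [CommRing S] [Ring A] [Algebra S A] (u : Aˣ) (x : A) :
    (innerAut (S := S) u) x = ↑u * x * ↑u⁻¹ := rfl

lemma innerAut_symm_apply {S A : Type*} [CommRing S] [Ring A] [Algebra S A] (u : Aˣ) (x : A) :
    (innerAut (S := S) u).symm x = ↑u⁻¹ * x * ↑u := rfl

section DiagF

variable (hstrong : ∀ e : R, e * e = e → (∀ r : R, (1 - e) * r * e = 0) → e = 0 ∨ e = 1)
variable (φ : triangularSubalgebra T R n ≃ₐ[T] triangularSubalgebra T R n)

/-- the diagonal of `φ(E_ii)` is the indicator of `{i}` -/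
lemma diag_f [Nontrivial R]
    (hstrong : ∀ e : R, e * e = e → (∀ r : R, (1 - e) * r * e = 0) → e = 0 ∨ e = 1)
    (φ : triangularSubalgebra T R n ≃ₐ[T] triangularSubalgebra T R n) (i p : Fin n) :
    ((φ (eK i) : triangularSubalgebra T R n) : Matrix (Fin n) (Fin n) R) p p
      = if p = i then 1 else 0 := by
  set h : ℕ → triangularSubalgebra T R n := fun k => φ (gK k) with hh
  have hidem : ∀ k, h k * h k = h k := fun k => by
    rw [hh]; dsimp only; rw [← map_mul, gK_mul (le_refl k)]
  have hsc : ∀ k (B : triangularSubalgebra T R n), (1 - h k) * B * h k = 0 := by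
    intro k B
    have h0 := congrArg φ (gK_semicentral k (φ.symm B))
    rw [map_mul, map_mul, map_sub, map_one, AlgEquiv.apply_symm_apply, map_zero] at h0
    exact h0
  have dich : ∀ k (p : Fin n),
      ((h k : triangularSubalgebra T R n) : Matrix (Fin n) (Fin n) R) p p = 0 ∨
      ((h k : triangularSubalgebra T R n) : Matrix (Fin n) (Fin n) R) p p = 1 :=
    fun k p => sc_diag hstrong (h k) (hidem k) (hsc k) p
  have hpre : ∀ k (p q : Fin n), p ≤ q →
      ((h k : triangularSubalgebra T R n) : Matrix (Fin n) (Fin n) R) q q = 1 →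
      ((h k : triangularSubalgebra T R n) : Matrix (Fin n) (Fin n) R) p p = 1 :=
    fun k p q hpq hq => sc_prefix (h k) (hsc k) hpq hq
  have hmono : ∀ k (p : Fin n),
      ((h k : triangularSubalgebra T R n) : Matrix (Fin n) (Fin n) R) p p = 1 →
      ((h (k+1) : triangularSubalgebra T R n) : Matrix (Fin n) (Fin n) R) p p = 1 := by
    intro k p hp
    have hmul : h k * h (k + 1) = h k := by
      rw [hh]; dsimp only; rw [← map_mul, gK_mul (Nat.le_succ k)]
    have h0 := congrArg (fun A : triangularSubalgebra T R n =>
      (A : Matrix (Fin n) (Fin n) R) p p) hmul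
    simp only [Subalgebra.coe_mul] at h0
    rw [diag_mul (h k).2 (h (k+1)).2, hp, one_mul] at h0
    exact h0
  have hstrict : ∀ k, k < n → ∃ p : Fin n,
      ((h k : triangularSubalgebra T R n) : Matrix (Fin n) (Fin n) R) p p = 0 ∧
      ((h (k+1) : triangularSubalgebra T R n) : Matrix (Fin n) (Fin n) R) p p = 1 := by
    intro k hk
    set c : triangularSubalgebra T R n := φ (eK ⟨k, hk⟩) with hc
    have hcdiff : c = h (k+1) - h k := by
      rw [hc, hh]; dsimp only; rw [← map_sub, gK_succ_sub k hk]
    have hcid : c * c = c := by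
      rw [hc, ← map_mul, eK, sing_mul (le_refl _) (le_refl _), one_mul]
    have hcne : c ≠ 0 := by
      intro h0
      have : (eK ⟨k, hk⟩ : triangularSubalgebra T R n) = 0 := by
        have := congrArg φ.symm h0
        rwa [AlgEquiv.symm_apply_apply, map_zero] at this
      have := congrArg (fun A : triangularSubalgebra T R n =>
        (A : Matrix (Fin n) (Fin n) R) ⟨k, hk⟩ ⟨k, hk⟩) this
      simp only [eK, sing_coe (le_refl _), Matrix.single_apply_same,
        ZeroMemClass.coe_zero, Matrix.zero_apply] at this
      exact one_ne_zero this
    by_contra hcon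
    push_neg at hcon
    have hdiag0 : ∀ p : Fin n, (c : Matrix (Fin n) (Fin n) R) p p = 0 := by
      intro p
      have hd := congrArg (fun A : triangularSubalgebra T R n =>
        (A : Matrix (Fin n) (Fin n) R) p p) hcdiff
      simp only [AddSubgroupClass.coe_sub, Matrix.sub_apply] at hd
      rcases dich k p with h0 | h1
      · rcases dich (k+1) p with h0' | h1'
        · rw [hd, h0, h0', sub_zero]
        · exact absurd h1' (hcon p h0)
      · rw [hd, hmono k p h1, h1, sub_self]
    have hstrict' : ∀ a b : Fin n, (b : ℕ) ≤ (a : ℕ) →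
        (c : Matrix (Fin n) (Fin n) R) a b = 0 := by
      intro a b hab
      rcases eq_or_lt_of_le hab with heq | hlt
      · have : b = a := Fin.ext heq
        subst this
        exact hdiag0 b
      · exact c.2 (Fin.lt_def.mpr hlt)
    have hpow : c ^ n = 0 := by
      apply Subtype.ext
      have : ((c ^ n : triangularSubalgebra T R n) : Matrix (Fin n) (Fin n) R)
          = (c : Matrix (Fin n) (Fin n) R) ^ n := SubmonoidClass.coe_pow c n
      rw [this, strict_nilpotent hstrict']
      rfl
    have hcn : ∀ m, 1 ≤ m → c ^ m = c := by
      intro m hm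
      induction m with
      | zero => omega
      | succ m ih =>
        rcases Nat.eq_or_lt_of_le hm with h1 | h2
        · rw [← h1, pow_one]
        · rw [pow_succ, ih (by omega), hcid]
    exact hcne (by rw [← hcn n (by omega : 1 ≤ n)]; exact hpow)
  classical
  set S : ℕ → Finset (Fin n) := fun k =>
    Finset.univ.filter (fun p : Fin n =>
      ((h k : triangularSubalgebra T R n) : Matrix (Fin n) (Fin n) R) p p = 1) with hS
  have hmemS : ∀ k (p : Fin n), p ∈ S k ↔
      ((h k : triangularSubalgebra T R n) : Matrix (Fin n) (Fin n) R) p p = 1 := by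
    intro k p
    rw [hS]
    simp only [Finset.mem_filter, Finset.mem_univ, true_and]
  have hS0 : (S 0).card = 0 := by
    rw [Finset.card_eq_zero]
    apply Finset.eq_empty_of_forall_notMem
    intro p hp
    rw [hmemS] at hp
    have hz : h 0 = 0 := by rw [hh]; dsimp only; rw [gK_zero, map_zero]
    rw [hz] at hp
    simp only [ZeroMemClass.coe_zero, Matrix.zero_apply] at hp
    exact zero_ne_one hp
  have hSn : (S n).card = n := by
    have huniv : S n = Finset.univ := by
      apply Finset.eq_univ_of_forall
      intro p
      rw [hmemS]
      have hz : h n = 1 := by rw [hh]; dsimp only; rw [gK_top, map_one]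
      rw [hz]
      simp only [OneMemClass.coe_one, Matrix.one_apply_eq]
    rw [huniv, Finset.card_univ, Fintype.card_fin]
  have hcard : ∀ k, k < n → (S k).card < (S (k+1)).card := by
    intro k hk
    apply Finset.card_lt_card
    constructor
    · intro p hp
      rw [hmemS] at hp ⊢
      exact hmono k p hp
    · intro hcontra
      obtain ⟨p, hp0, hp1⟩ := hstrict k hk
      have : p ∈ S k := hcontra ((hmemS (k+1) p).mpr hp1)
      rw [hmemS] at this
      rw [hp0] at this
      exact zero_ne_one this
  have mlow : ∀ k, k ≤ n → k ≤ (S k).card := by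
    intro k
    induction k with
    | zero => intro _; omega
    | succ k ih =>
      intro hk
      have h1 := hcard k (by omega)
      have h2 := ih (by omega)
      omega
  have mup : ∀ d k, k + d ≤ n → (S k).card + d ≤ (S (k + d)).card := by
    intro d
    induction d with
    | zero => intro k _; simp
    | succ d ih =>
      intro k hk
      have h1 := ih k (by omega)
      have h2 := hcard (k + d) (by omega)
      have : k + (d + 1) = (k + d) + 1 := by omega
      rw [this]
      omega
  have hm : ∀ k, k ≤ n → (S k).card = k := by
    intro k hk
    have h1 := mlow k hk
    have h2 := mup (n - k) k (by omega)
    rw [show k + (n - k) = n by omega, hSn] at h2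
    omega
  have char : ∀ k, k ≤ n → ∀ p : Fin n,
      (((h k : triangularSubalgebra T R n) : Matrix (Fin n) (Fin n) R) p p = 1 ↔ (p : ℕ) < k) := by
    intro k hk p
    constructor
    · intro hp
      have hsub : Finset.Iic p ⊆ S k := by
        intro q hq
        rw [Finset.mem_Iic] at hq
        rw [hmemS]
        exact hpre k q p hq hp
      have hle := Finset.card_le_card hsub
      rw [Fin.card_Iic, hm k hk] at hle
      omega
    · intro hp
      by_contra hne
      have hsub : S k ⊆ Finset.Iio p := by
        intro q hq
        rw [hmemS] at hq
        rw [Finset.mem_Iio]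
        by_contra hqp
        push_neg at hqp
        exact hne (hpre k p q hqp hq)
      have hle := Finset.card_le_card hsub
      rw [Fin.card_Iio, hm k hk] at hle
      omega
  have hfi : φ (eK i) = h ((i : ℕ) + 1) - h (i : ℕ) := by
    rw [hh]
    dsimp only
    rw [← map_sub, gK_succ_sub (i : ℕ) i.isLt, Fin.eta]
  have e1 : ((h ((i : ℕ) + 1) : triangularSubalgebra T R n) : Matrix (Fin n) (Fin n) R) p p
      = if (p : ℕ) < (i : ℕ) + 1 then 1 else 0 := by
    by_cases hlt : (p : ℕ) < (i : ℕ) + 1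
    · rw [if_pos hlt]
      exact (char ((i : ℕ) + 1) (by omega) p).mpr hlt
    · rw [if_neg hlt]
      exact (dich _ p).resolve_right (fun h1 => hlt ((char _ (by omega) p).mp h1))
  have e2 : ((h (i : ℕ) : triangularSubalgebra T R n) : Matrix (Fin n) (Fin n) R) p p
      = if (p : ℕ) < (i : ℕ) then 1 else 0 := by
    by_cases hlt : (p : ℕ) < (i : ℕ)
    · rw [if_pos hlt]
      exact (char (i : ℕ) (by omega) p).mpr hlt
    · rw [if_neg hlt]
      exact (dich _ p).resolve_right (fun h1 => hlt ((char _ (by omega) p).mp h1))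
  rw [hfi, AddSubgroupClass.coe_sub, Matrix.sub_apply, e1, e2]
  by_cases hpi : p = i
  · subst hpi
    rw [if_pos rfl, if_pos (by omega), if_neg (by omega), sub_zero]
  · have hne : (p : ℕ) ≠ (i : ℕ) := fun hh' => hpi (Fin.ext hh')
    rw [if_neg hpi]
    rcases lt_or_ge (p : ℕ) (i : ℕ) with h' | h'
    · rw [if_pos (by omega), if_pos h', sub_self]
    · rw [if_neg (by omega), if_neg (by omega), sub_self]

end DiagF

lemma sum_sing_diag (x : Fin n → R) :
    ((∑ i, sing i i (x i) : triangularSubalgebra T R n) : Matrix (Fin n) (Fin n) R)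
      = Matrix.diagonal x := by
  rw [AddSubmonoidClass.coe_finset_sum]
  ext a b
  rw [Matrix.sum_apply]
  by_cases hab : a = b
  · subst hab
    rw [Matrix.diagonal_apply_eq]
    rw [Finset.sum_eq_single a]
    · rw [sing_coe (le_refl a), Matrix.single_apply_same]
    · intro k _ hk
      rw [sing_coe (le_refl k)]
      exact Matrix.single_apply_of_row_ne hk _ _ _
    · intro h; exact absurd (Finset.mem_univ a) h
  · rw [Matrix.diagonal_apply_ne _ hab]
    refine Finset.sum_eq_zero fun k _ => ?_
    rw [sing_coe (le_refl k)]
    by_cases hk : k = a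
    · subst hk
      exact Matrix.single_apply_of_col_ne _ _ hab _
    · exact Matrix.single_apply_of_row_ne hk _ _ _

lemma exists_unit [Nontrivial R]
    (hstrong : ∀ e : R, e * e = e → (∀ r : R, (1 - e) * r * e = 0) → e = 0 ∨ e = 1)
    (φ : triangularSubalgebra T R n ≃ₐ[T] triangularSubalgebra T R n) :
    ∃ u : (triangularSubalgebra T R n)ˣ, ∀ j : Fin n,
      (u : triangularSubalgebra T R n) * φ (eK j) = eK j * (u : triangularSubalgebra T R n) := by
  classical
  set u0 : triangularSubalgebra T R n := ∑ k : Fin n, eK k * φ (eK k) with hu0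
  have horth : ∀ k j : Fin n, k ≠ j → φ (eK k) * φ (eK j) = 0 := by
    intro k j hkj
    rw [← map_mul, eK, eK, sing_mul_ne (le_refl k) (le_refl j) hkj, map_zero]
  have hfidem : ∀ j : Fin n, φ (eK j) * φ (eK j) = φ (eK j) := by
    intro j
    rw [← map_mul, eK, sing_mul (le_refl j) (le_refl j), one_mul]
  have horthE : ∀ k j : Fin n, k ≠ j →
      (eK k : triangularSubalgebra T R n) * eK j = 0 := fun k j hkj => by
    rw [eK, eK, sing_mul_ne (le_refl k) (le_refl j) hkj]
  have heidem : ∀ j : Fin n, (eK j : triangularSubalgebra T R n) * eK j = eK j := fun j => by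
    rw [eK, sing_mul (le_refl j) (le_refl j), one_mul]
  have hcomm : ∀ j : Fin n, u0 * φ (eK j) = eK j * u0 := by
    intro j
    rw [hu0, Finset.sum_mul, Finset.mul_sum]
    refine Finset.sum_congr rfl fun k _ => ?_
    by_cases hkj : k = j
    · subst hkj
      rw [mul_assoc, hfidem k, ← mul_assoc, heidem k]
    · rw [mul_assoc, horth k j hkj, mul_zero, ← mul_assoc, horthE j k (fun hh => hkj hh.symm),
        zero_mul]
  have hdiag : ∀ p : Fin n, (u0 : Matrix (Fin n) (Fin n) R) p p = 1 := by
    intro p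
    rw [hu0]
    rw [show ((∑ k : Fin n, eK k * φ (eK k) : triangularSubalgebra T R n)
        : Matrix (Fin n) (Fin n) R) = ∑ k : Fin n,
        ((eK k * φ (eK k) : triangularSubalgebra T R n) : Matrix (Fin n) (Fin n) R) from
      AddSubmonoidClass.coe_finset_sum _ _]
    rw [Matrix.sum_apply]
    rw [Finset.sum_eq_single p]
    · rw [Subalgebra.coe_mul, diag_mul (eK p).2 (φ (eK p)).2,
        diag_f hstrong φ p p, if_pos rfl, mul_one, eK, sing_coe (le_refl p),
        Matrix.single_apply_same]
    · intro k _ hk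
      rw [Subalgebra.coe_mul, diag_mul (eK k).2 (φ (eK k)).2, eK, sing_coe (le_refl k),
        Matrix.single_apply_of_row_ne hk, zero_mul]
    · intro h; exact absurd (Finset.mem_univ p) h
  set N : triangularSubalgebra T R n := u0 - 1 with hN
  have hNstrict : ∀ a b : Fin n, (b : ℕ) ≤ (a : ℕ) →
      (N : Matrix (Fin n) (Fin n) R) a b = 0 := by
    intro a b hab
    rw [hN, AddSubgroupClass.coe_sub, Matrix.sub_apply, OneMemClass.coe_one]
    rcases eq_or_lt_of_le hab with heq | hlt
    · have hba : b = a := Fin.ext heq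
      subst hba
      rw [hdiag b, Matrix.one_apply_eq, sub_self]
    · rw [u0.2 (Fin.lt_def.mpr hlt), Matrix.one_apply_ne' (fun hh => by
        subst hh; omega), sub_zero]
  have hNpow : N ^ n = 0 := by
    apply Subtype.ext
    rw [SubmonoidClass.coe_pow, strict_nilpotent hNstrict]
    rfl
  have hunit : IsUnit u0 := by
    have h1 : IsUnit (1 + N) := IsNilpotent.isUnit_one_add ⟨n, hNpow⟩
    have h2 : 1 + N = u0 := by rw [hN]; abel
    rwa [h2] at h1
  refine ⟨hunit.unit, fun j => ?_⟩
  simp only [IsUnit.unit_spec]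
  exact hcomm j

set_option maxHeartbeats 1000000 in
lemma psi_decomp (hn : 1 ≤ n)
    (ψ : triangularSubalgebra T R n ≃ₐ[T] triangularSubalgebra T R n)
    (hfix : ∀ j : Fin n, ψ (eK j) = eK j) :
    ∃ (w : (triangularSubalgebra T R n)ˣ) (α : R ≃ₐ[T] R),
      ∀ A : triangularSubalgebra T R n,
        ψ A = ↑w * entrywiseMap T R n α A * ↑w⁻¹ := by
  classical
  set σ : Fin n → Fin n → R → R := fun i j r =>
    ((ψ (sing i j r) : triangularSubalgebra T R n) : Matrix (Fin n) (Fin n) R) i j with hσ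
  set τ : Fin n → Fin n → R → R := fun i j r =>
    ((ψ.symm (sing i j r) : triangularSubalgebra T R n) : Matrix (Fin n) (Fin n) R) i j with hτ
  have hfix' : ∀ j, ψ.symm (eK j) = eK j := by
    intro j
    conv_lhs => rw [← hfix j]
    rw [AlgEquiv.symm_apply_apply]
  have key1 : ∀ {i j : Fin n}, i ≤ j → ∀ r : R,
      ψ (sing i j r) = sing i j (σ i j r) := by
    intro i j hij r
    have h1 : (sing i j r : triangularSubalgebra T R n) = eK i * sing i j r * eK j := by
      rw [corner i j hij, sing_coe hij, Matrix.single_apply_same]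
    conv_lhs => rw [h1]
    rw [map_mul, map_mul, hfix i, hfix j, corner i j hij]
  have key1' : ∀ {i j : Fin n}, i ≤ j → ∀ r : R,
      ψ.symm (sing i j r) = sing i j (τ i j r) := by
    intro i j hij r
    have h1 : (sing i j r : triangularSubalgebra T R n) = eK i * sing i j r * eK j := by
      rw [corner i j hij, sing_coe hij, Matrix.single_apply_same]
    conv_lhs => rw [h1]
    rw [map_mul, map_mul, hfix' i, hfix' j, corner i j hij]
  have hστ : ∀ {i j : Fin n}, i ≤ j → ∀ r : R, σ i j (τ i j r) = r := by
    intro i j hij r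
    have h1 : ψ (sing i j (τ i j r)) = sing i j r := by
      rw [← key1' hij r, AlgEquiv.apply_symm_apply]
    rw [key1 hij] at h1
    exact sing_inj hij h1
  have hτσ : ∀ {i j : Fin n}, i ≤ j → ∀ r : R, τ i j (σ i j r) = r := by
    intro i j hij r
    have h1 : ψ.symm (sing i j (σ i j r)) = sing i j r := by
      rw [← key1 hij r, AlgEquiv.symm_apply_apply]
    rw [key1' hij] at h1
    exact sing_inj hij h1
  have hσinj : ∀ {i j : Fin n}, i ≤ j → ∀ r s : R, σ i j r = σ i j s → r = s := by
    intro i j hij r s hrs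
    have h2 := congrArg (τ i j) hrs
    rwa [hτσ hij, hτσ hij] at h2
  have hσmul : ∀ {i j k : Fin n}, i ≤ j → j ≤ k → ∀ r s : R,
      σ i j r * σ j k s = σ i k (r * s) := by
    intro i j k hij hjk r s
    refine sing_inj (T := T) (le_trans hij hjk) ?_
    rw [← sing_mul hij hjk, ← key1 hij, ← key1 hjk, ← map_mul, sing_mul hij hjk,
      key1 (le_trans hij hjk)]
  have hσadd : ∀ {i j : Fin n}, i ≤ j → ∀ r s : R,
      σ i j (r + s) = σ i j r + σ i j s := by
    intro i j hij r s
    refine sing_inj (T := T) hij ?_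
    calc sing i j (σ i j (r + s)) = ψ (sing i j (r + s)) := (key1 hij _).symm
      _ = ψ (sing i j r + sing i j s) := by rw [sing_add hij]
      _ = ψ (sing i j r) + ψ (sing i j s) := map_add ψ _ _
      _ = sing i j (σ i j r) + sing i j (σ i j s) := by rw [key1 hij, key1 hij]
      _ = sing i j (σ i j r + σ i j s) := sing_add hij _ _
  have hσzero : ∀ {i j : Fin n}, i ≤ j → σ i j 0 = 0 := by
    intro i j hij
    have h1 := hσadd hij 0 0
    rw [add_zero] at h1
    have h2 : σ i j 0 + σ i j 0 = σ i j 0 + 0 := by rw [add_zero]; exact h1.symm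
    exact add_left_cancel h2
  have hψsmul : ∀ (t : T) (x : triangularSubalgebra T R n), ψ (t • x) = t • ψ x := by
    intro t x
    rw [Algebra.smul_def, map_mul, AlgEquiv.commutes, ← Algebra.smul_def]
  have hσsmul : ∀ {i j : Fin n}, i ≤ j → ∀ (t : T) (r : R),
      σ i j (t • r) = t • σ i j r := by
    intro i j hij t r
    refine sing_inj (T := T) hij ?_
    calc sing i j (σ i j (t • r)) = ψ (sing i j (t • r)) := (key1 hij _).symm
      _ = ψ (t • sing i j r) := by rw [sing_smul hij]
      _ = t • ψ (sing i j r) := hψsmul t _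
      _ = t • sing i j (σ i j r) := by rw [key1 hij]
      _ = sing i j (t • σ i j r) := sing_smul hij t _
  have hσone : ∀ i : Fin n, σ i i 1 = 1 := by
    intro i
    refine sing_inj (T := T) (le_refl i) ?_
    rw [← key1 (le_refl i)]
    show ψ (eK i) = sing i i 1
    rw [hfix i]
    rfl
  have hbunit : ∀ {i j : Fin n}, i ≤ j → ∃ c : R, σ i j 1 * c = 1 ∧ c * σ i j 1 = 1 := by
    intro i j hij
    have hinj0 : ∀ x : R, x * σ i j 1 = 0 → x = 0 := by
      intro x hx
      have hxs : x = σ i i (τ i i x) := (hστ (le_refl i) x).symm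
      have h1 : σ i j (τ i i x * 1) = 0 := by
        rw [← hσmul (le_refl i) hij, ← hxs]
        exact hx
      rw [mul_one] at h1
      have h2 : τ i i x = 0 := by
        apply hσinj hij
        rw [h1, hσzero hij]
      rw [hxs, h2, hσzero (le_refl i)]
    have hcb : σ i i (τ i j 1) * σ i j 1 = 1 := by
      rw [hσmul (le_refl i) hij, mul_one]
      exact hστ hij 1
    have hbc : σ i j 1 * σ i i (τ i j 1) = 1 := by
      have h2 : (σ i j 1 * σ i i (τ i j 1) - 1) * σ i j 1 = 0 := by
        rw [sub_mul, one_mul, mul_assoc, hcb, mul_one, sub_self]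
      exact sub_eq_zero.mp (hinj0 _ h2)
    exact ⟨σ i i (τ i j 1), hbc, hcb⟩
  set z : Fin n := ⟨0, hn⟩ with hz0
  have hzle : ∀ i : Fin n, z ≤ i := fun i => Fin.le_def.mpr (Nat.zero_le _)
  choose cinv hcinv1 hcinv2 using fun i : Fin n => hbunit (hzle i)
  set α : R ≃ₐ[T] R :=
    { toFun := σ z z
      invFun := τ z z
      left_inv := fun r => hτσ (le_refl z) r
      right_inv := fun r => hστ (le_refl z) r
      map_mul' := fun r s => (hσmul (le_refl z) (le_refl z) r s).symm
      map_add' := fun r s => hσadd (le_refl z) r s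
      commutes' := fun t => by
        show σ z z (algebraMap T R t) = algebraMap T R t
        rw [Algebra.algebraMap_eq_smul_one, hσsmul (le_refl z) t 1, hσone z] } with hα
  have hαapply : ∀ r : R, α r = σ z z r := fun r => rfl
  have hdmul : ∀ x y : Fin n → R,
      (∑ i, sing i i (x i) : triangularSubalgebra T R n) * (∑ i, sing i i (y i))
        = ∑ i, sing i i (x i * y i) := by
    intro x y
    rw [Finset.sum_mul_sum]
    refine Finset.sum_congr rfl fun i _ => ?_
    rw [Finset.sum_eq_single i]
    · exact sing_mul (le_refl i) (le_refl i) _ _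
    · intro j _ hji
      exact sing_mul_ne (le_refl i) (le_refl j) (fun hh => hji hh.symm) _ _
    · intro h; exact absurd (Finset.mem_univ i) h
  have hWW' : (∑ i, sing i i (cinv i) : triangularSubalgebra T R n)
      * (∑ i, sing i i (σ z i 1)) = 1 := by
    rw [hdmul]
    exact Eq.trans (Finset.sum_congr rfl fun i _ => by rw [hcinv2 i]; rfl) sum_eK
  have hW'W : (∑ i, sing i i (σ z i 1) : triangularSubalgebra T R n)
      * (∑ i, sing i i (cinv i)) = 1 := by
    rw [hdmul]
    exact Eq.trans (Finset.sum_congr rfl fun i _ => by rw [hcinv1 i]; rfl) sum_eK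
  set w : (triangularSubalgebra T R n)ˣ :=
    ⟨∑ i, sing i i (cinv i), ∑ i, sing i i (σ z i 1), hWW', hW'W⟩ with hw
  have hwc : ((w : triangularSubalgebra T R n) : Matrix (Fin n) (Fin n) R)
      = Matrix.diagonal cinv := sum_sing_diag cinv
  have hwinvc : (((w⁻¹ : (triangularSubalgebra T R n)ˣ) : triangularSubalgebra T R n)
      : Matrix (Fin n) (Fin n) R) = Matrix.diagonal (fun i => σ z i 1) := sum_sing_diag _
  refine ⟨w, α, fun A => ?_⟩
  have hkey : ∀ {p q : Fin n}, p ≤ q → ∀ r : R,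
      σ p q r = cinv p * σ z z r * σ z q 1 := by
    intro p q hpq r
    have h1 : σ z p 1 * σ p q r = σ z z r * σ z q 1 := by
      rw [hσmul (hzle p) hpq 1 r, one_mul, hσmul (le_refl z) (hzle q) r 1, mul_one]
    have h2 : cinv p * (σ z p 1 * σ p q r) = cinv p * (σ z z r * σ z q 1) := by rw [h1]
    rw [← mul_assoc, hcinv2 p, one_mul] at h2
    rw [h2, ← mul_assoc]
  have hψA : ∀ p q : Fin n, p ≤ q →
      ((ψ A : triangularSubalgebra T R n) : Matrix (Fin n) (Fin n) R) p q
        = σ p q ((A : Matrix (Fin n) (Fin n) R) p q) := by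
    intro p q hpq
    have h1 : eK p * ψ A * eK q
        = sing p q (((ψ A : triangularSubalgebra T R n) : Matrix (Fin n) (Fin n) R) p q) :=
      corner p q hpq _
    have h2 : eK p * ψ A * eK q = ψ (eK p * A * eK q) := by
      rw [map_mul, map_mul, hfix p, hfix q]
    rw [corner p q hpq A, key1 hpq] at h2
    exact sing_inj hpq (h1.symm.trans h2)
  apply Subtype.ext
  rw [Subalgebra.coe_mul, Subalgebra.coe_mul, hwc, hwinvc]
  have hE : ((entrywiseMap T R n α A : triangularSubalgebra T R n)
      : Matrix (Fin n) (Fin n) R)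
      = Matrix.of fun i j => α ((A : Matrix (Fin n) (Fin n) R) i j) := rfl
  rw [hE]
  ext p q
  rw [Matrix.mul_diagonal, Matrix.diagonal_mul, Matrix.of_apply]
  rcases le_or_gt p q with hpq | hqp
  · rw [hψA p q hpq, hαapply]
    exact hkey hpq _
  · rw [(ψ A).2 hqp, A.2 hqp, hαapply, hσzero (le_refl z), mul_zero, zero_mul]

end Stmt10Aux


/-- If `R` is a strongly indecomposable `T`-algebra (its only semicentral idempotents are
`0` and `1`), every `T`-algebra automorphism of the upper triangular matrix algebra
`T(n,R)` is a product of an inner automorphism and a ring automorphism. -/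
theorem stmt10 (T R : Type*) [CommRing T] [Ring R] [Algebra T R] (n : ℕ) (hn : 1 ≤ n)
    (hstrong : ∀ e : R, e * e = e → (∀ r : R, (1 - e) * r * e = 0) → e = 0 ∨ e = 1)
    (φ : triangularSubalgebra T R n ≃ₐ[T] triangularSubalgebra T R n) :
    ∃ (u : (triangularSubalgebra T R n)ˣ) (α : R ≃ₐ[T] R),
      ∀ A : triangularSubalgebra T R n,
        φ A = ↑u * entrywiseMap T R n α A * ↑u⁻¹ := by
  classical
  by_cases h01 : (0 : R) = 1
  · refine ⟨1, AlgEquiv.refl, fun A => ?_⟩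
    apply Subtype.ext
    ext p q
    have hall : ∀ x y : R, x = y := fun x y => by
      calc x = x * 1 := (mul_one x).symm
        _ = x * 0 := by rw [h01]
        _ = 0 := mul_zero x
        _ = y * 0 := (mul_zero y).symm
        _ = y * 1 := by rw [h01]
        _ = y := mul_one y
    exact hall _ _
  · have hNT : Nontrivial R := ⟨⟨0, 1, h01⟩⟩
    obtain ⟨u, hu⟩ := Stmt10Aux.exists_unit hstrong φ
    set ψ := φ.trans (Stmt10Aux.innerAut (S := T) u) with hψ
    have h2 : ∀ A, ψ A = ↑u * φ A * ↑u⁻¹ := fun A => rfl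
    have hfix : ∀ j : Fin n, ψ (Stmt10Aux.eK j) = Stmt10Aux.eK j := by
      intro j
      rw [h2, hu j, mul_assoc, Units.mul_inv, mul_one]
    obtain ⟨w, α, hw⟩ := Stmt10Aux.psi_decomp hn ψ hfix
    refine ⟨u⁻¹ * w, α, fun A => ?_⟩
    have h1 : ψ A = ↑w * entrywiseMap T R n α A * ↑w⁻¹ := hw A
    calc φ A = ↑u⁻¹ * (↑u * φ A * ↑u⁻¹) * ↑u := by simp [mul_assoc]
      _ = ↑u⁻¹ * (↑w * entrywiseMap T R n α A * ↑w⁻¹) * ↑u := by rw [← h2, h1]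
      _ = ↑(u⁻¹ * w) * entrywiseMap T R n α A * ↑(u⁻¹ * w)⁻¹ := by
        rw [mul_inv_rev, inv_inv, Units.val_mul, Units.val_mul]
        simp [mul_assoc]
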